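/- Let K be a field with valuation v, M = ℤⁿ, and Δ a polyhedron in ℝⁿ. Define K[M]^Δ = { Σ_u α_u χ^u ∈ K[M] : v(α_u) + ⟨u, ω⟩ ≥ 0 for all ω ∈ Δ and all u with α_u ≠ 0 }. Then K[M]^Δ is integrally closed in K[M]: if f ∈ K[M] satisfies a monic polynomial equation f^m + a_{m-1}f^{m-1} + ⋯ + a_0 = 0 with all a_i ∈ K[M]^Δ, and Δ is a polytope (so K[M]^Δ = ∩_{ω vertex} K[M]^ω), then f ∈ K[M]^Δ. -/

import Mathlib

open scoped BigOperators

/-- The `ω`-weight `v_ω(f) = min_{u ∈ supp f} (v(f_u) + ⟨u, ω⟩)` of a Laurent polynomial. -/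
noncomputable def omegaWeight {K : Type*} [Field K] {n : ℕ} (v : K → WithTop ℝ)
    (ω : Fin n → ℝ) (f : AddMonoidAlgebra K (Fin n → ℤ)) : WithTop ℝ :=
  (Finsupp.support f.coeff).inf fun u =>
    v (f.coeff u) + (((∑ i, (u i : ℝ) * ω i) : ℝ) : WithTop ℝ)

namespace Stmt4Aux

noncomputable instance lexLOACG {n : ℕ} : IsOrderedCancelAddMonoid (Lex (Fin n → ℤ)) :=
  inferInstance

noncomputable instance lexLO {n : ℕ} : LinearOrder (Lex (Fin n → ℤ)) :=
  inferInstance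

variable {K : Type*} [Field K] {n : ℕ}

/-- the pairing `⟨u, ω⟩`. -/
def ip (ω : Fin n → ℝ) (u : Fin n → ℤ) : ℝ := ∑ i, (u i : ℝ) * ω i

lemma ip_add (ω : Fin n → ℝ) (u w : Fin n → ℤ) : ip ω (u + w) = ip ω u + ip ω w := by
  simp [ip, add_mul, Finset.sum_add_distrib]

lemma ip_zero (ω : Fin n → ℝ) : ip ω 0 = 0 := by simp [ip]

/-- the weight of a single coefficient. -/
noncomputable def wt (v : K → WithTop ℝ) (ω : Fin n → ℝ)
    (g : AddMonoidAlgebra K (Fin n → ℤ)) (u : Fin n → ℤ) : WithTop ℝ :=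
  v (g.coeff u) + ((ip ω u : ℝ) : WithTop ℝ)

lemma omegaWeight_def (v : K → WithTop ℝ) (ω : Fin n → ℝ)
    (g : AddMonoidAlgebra K (Fin n → ℤ)) :
    omegaWeight v ω g = g.coeff.support.inf (wt v ω g) := rfl

section coe
variable {s t : ℝ} {a b : WithTop ℝ}

lemma coe_sub_le_iff : ((s - t : ℝ) : WithTop ℝ) ≤ a ↔ ((s : ℝ) : WithTop ℝ) ≤ a + (t : ℝ) := by
  induction a using WithTop.recTopCoe with
  | top => simp
  | coe r =>
    rw [← WithTop.coe_add, WithTop.coe_le_coe, WithTop.coe_le_coe]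
    constructor <;> intro <;> linarith

lemma coe_sub_lt_iff : ((s - t : ℝ) : WithTop ℝ) < a ↔ ((s : ℝ) : WithTop ℝ) < a + (t : ℝ) := by
  induction a using WithTop.recTopCoe with
  | top => exact iff_of_true (WithTop.coe_lt_top _) (by rw [top_add]; exact WithTop.coe_lt_top _)
  | coe r =>
    rw [← WithTop.coe_add, WithTop.coe_lt_coe, WithTop.coe_lt_coe]
    constructor <;> intro <;> linarith

lemma coe_sub_eq_iff : a = ((s - t : ℝ) : WithTop ℝ) ↔ a + (t : ℝ) = ((s : ℝ) : WithTop ℝ) := by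
  induction a using WithTop.recTopCoe with
  | top => exact iff_of_false WithTop.top_ne_coe (by rw [top_add]; exact WithTop.top_ne_coe)
  | coe r =>
    rw [← WithTop.coe_add, WithTop.coe_eq_coe, WithTop.coe_eq_coe]
    constructor <;> intro <;> linarith

lemma coe_add_le_add (h1 : ((s : ℝ) : WithTop ℝ) ≤ a) (h2 : ((t : ℝ) : WithTop ℝ) ≤ b) :
    ((s + t : ℝ) : WithTop ℝ) ≤ a + b := by
  rw [WithTop.coe_add]; exact add_le_add h1 h2

lemma coe_add_lt_add (h1 : ((s : ℝ) : WithTop ℝ) < a) (h2 : ((t : ℝ) : WithTop ℝ) ≤ b) :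
    ((s + t : ℝ) : WithTop ℝ) < a + b := by
  rw [WithTop.coe_add]
  calc ((s : ℝ) : WithTop ℝ) + (t : ℝ) < a + (t : ℝ) :=
        WithTop.add_lt_add_right (WithTop.coe_ne_top) h1
    _ ≤ a + b := add_le_add_right h2 a

lemma coe_add_lt_add' (h1 : ((s : ℝ) : WithTop ℝ) ≤ a) (h2 : ((t : ℝ) : WithTop ℝ) < b) :
    ((s + t : ℝ) : WithTop ℝ) < a + b := by
  rw [add_comm a b, show s + t = t + s by ring]
  exact coe_add_lt_add h2 h1

end coe

section val
variable {v : K → WithTop ℝ}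

lemma v_zero (hv0 : ∀ α : K, v α = ⊤ ↔ α = 0) : v 0 = ⊤ := (hv0 0).2 rfl

lemma v_one (hv0 : ∀ α : K, v α = ⊤ ↔ α = 0)
    (hvmul : ∀ α β : K, v (α * β) = v α + v β) : v 1 = 0 := by
  have h := hvmul 1 1
  rw [one_mul] at h
  have ht : v 1 ≠ ⊤ := fun hh => one_ne_zero ((hv0 1).1 hh)
  obtain ⟨r, hr⟩ := WithTop.ne_top_iff_exists.1 ht
  rw [← hr] at h ⊢
  rw [← WithTop.coe_add, WithTop.coe_eq_coe] at h
  have : r = 0 := by linarith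
  rw [this]; rfl

lemma v_neg (hv0 : ∀ α : K, v α = ⊤ ↔ α = 0)
    (hvmul : ∀ α β : K, v (α * β) = v α + v β) (α : K) : v (-α) = v α := by
  have h1 : v ((-1 : K) * (-1)) = v (-1 : K) + v (-1 : K) := hvmul _ _
  rw [neg_one_mul, neg_neg, v_one hv0 hvmul] at h1
  have ht : v (-1 : K) ≠ ⊤ := fun hh => by
    have := (hv0 _).1 hh; norm_num at this
  obtain ⟨r, hr⟩ := WithTop.ne_top_iff_exists.1 ht
  rw [← hr, ← WithTop.coe_add] at h1
  have hr0 : r = 0 := by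
    have : r + r = 0 := by exact_mod_cast h1.symm
    linarith
  have hv1 : v (-1 : K) = 0 := by rw [← hr, hr0]; rfl
  calc v (-α) = v ((-1) * α) := by rw [neg_one_mul]
    _ = v (-1 : K) + v α := hvmul _ _
    _ = v α := by rw [hv1, zero_add]

lemma v_sum (hv0 : ∀ α : K, v α = ⊤ ↔ α = 0)
    (hvadd : ∀ α β : K, min (v α) (v β) ≤ v (α + β))
    {ι : Type*} (s : Finset ι) (h : ι → K) (c : WithTop ℝ)
    (hb : ∀ i ∈ s, c ≤ v (h i)) : c ≤ v (∑ i ∈ s, h i) := by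
  induction s using Finset.cons_induction with
  | empty => simp [v_zero hv0]
  | cons a s ha ih =>
    rw [Finset.sum_cons]
    refine le_trans (le_min (hb a (Finset.mem_cons_self a s)) ?_) (hvadd _ _)
    exact ih fun i hi => hb i (Finset.mem_cons_of_mem hi)

lemma v_add_eq_left (hv0 : ∀ α : K, v α = ⊤ ↔ α = 0)
    (hvmul : ∀ α β : K, v (α * β) = v α + v β)
    (hvadd : ∀ α β : K, min (v α) (v β) ≤ v (α + β))
    {x y : K} (h : v x < v y) : v (x + y) = v x := by
  refine le_antisymm ?_ (le_trans (le_min le_rfl h.le) (hvadd x y))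
  by_contra hlt
  push_neg at hlt
  have h2 := hvadd (x + y) (-y)
  rw [v_neg hv0 hvmul, add_neg_cancel_right] at h2
  exact absurd h2 (not_le.2 (lt_min hlt h))

end val

section main
variable {v : K → WithTop ℝ}

lemma mul_apply_prod (f g : AddMonoidAlgebra K (Fin n → ℤ)) (u : Fin n → ℤ) :
    (f * g).coeff u = ∑ p ∈ f.coeff.support ×ˢ g.coeff.support,
      if p.1 + p.2 = u then f.coeff p.1 * g.coeff p.2 else 0 := by
  rw [AddMonoidAlgebra.coeff_mul, Finset.sum_product]
  rfl

lemma le_omegaWeight_iff (hv0 : ∀ α : K, v α = ⊤ ↔ α = 0)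
    (ω : Fin n → ℝ) (g : AddMonoidAlgebra K (Fin n → ℤ)) (c : ℝ) :
    ((c : ℝ) : WithTop ℝ) ≤ omegaWeight v ω g ↔
      ∀ u, ((c : ℝ) : WithTop ℝ) ≤ wt v ω g u := by
  constructor
  · intro h u
    by_cases hu : u ∈ g.coeff.support
    · exact le_trans h (Finset.inf_le hu)
    · have h0 : g.coeff u = 0 := Finsupp.notMem_support_iff.1 hu
      show _ ≤ v (g.coeff u) + _
      rw [h0, v_zero hv0, top_add]
      exact le_top
  · intro h
    exact Finset.le_inf fun u _ => h u

lemma wt_mul_ge (hv0 : ∀ α : K, v α = ⊤ ↔ α = 0)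
    (hvmul : ∀ α β : K, v (α * β) = v α + v β)
    (hvadd : ∀ α β : K, min (v α) (v β) ≤ v (α + β))
    (ω : Fin n → ℝ) (f g : AddMonoidAlgebra K (Fin n → ℤ)) (cf cg : ℝ)
    (hf : ∀ u, ((cf : ℝ) : WithTop ℝ) ≤ wt v ω f u)
    (hg : ∀ u, ((cg : ℝ) : WithTop ℝ) ≤ wt v ω g u) (u : Fin n → ℤ) :
    ((cf + cg : ℝ) : WithTop ℝ) ≤ wt v ω (f * g) u := by
  have key : ((cf + cg - ip ω u : ℝ) : WithTop ℝ) ≤ v ((f * g).coeff u) := by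
    rw [mul_apply_prod]
    refine v_sum hv0 hvadd _ _ _ fun p hp => ?_
    by_cases hpu : p.1 + p.2 = u
    · rw [if_pos hpu, hvmul]
      have h1 : ((cf - ip ω p.1 : ℝ) : WithTop ℝ) ≤ v (f.coeff p.1) := coe_sub_le_iff.2 (hf p.1)
      have h2 : ((cg - ip ω p.2 : ℝ) : WithTop ℝ) ≤ v (g.coeff p.2) := coe_sub_le_iff.2 (hg p.2)
      refine le_trans (le_of_eq ?_) (coe_add_le_add h1 h2)
      rw [WithTop.coe_eq_coe, ← hpu, ip_add]
      ring
    · rw [if_neg hpu, v_zero hv0]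
      exact le_top
  calc ((cf + cg : ℝ) : WithTop ℝ)
      = ((cf + cg - ip ω u : ℝ) : WithTop ℝ) + ((ip ω u : ℝ) : WithTop ℝ) := by
        rw [← WithTop.coe_add, WithTop.coe_eq_coe]; ring
    _ ≤ wt v ω (f * g) u := add_le_add_left key _

lemma omegaWeight_mul_le (hv0 : ∀ α : K, v α = ⊤ ↔ α = 0)
    (hvmul : ∀ α β : K, v (α * β) = v α + v β)
    (hvadd : ∀ α β : K, min (v α) (v β) ≤ v (α + β))
    (ω : Fin n → ℝ) (f g : AddMonoidAlgebra K (Fin n → ℤ)) (cf cg : ℝ)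
    (hf : omegaWeight v ω f = ((cf : ℝ) : WithTop ℝ))
    (hg : omegaWeight v ω g = ((cg : ℝ) : WithTop ℝ)) :
    omegaWeight v ω (f * g) ≤ ((cf + cg : ℝ) : WithTop ℝ) := by
  have hfs : f.coeff.support.Nonempty := by
    rw [Finset.nonempty_iff_ne_empty]
    intro h
    rw [omegaWeight_def, h] at hf
    simp at hf
  have hgs : g.coeff.support.Nonempty := by
    rw [Finset.nonempty_iff_ne_empty]
    intro h
    rw [omegaWeight_def, h] at hg
    simp at hg
  set Tf := f.coeff.support.filter (fun u => wt v ω f u = ((cf : ℝ) : WithTop ℝ)) with hTfdef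
  set Tg := g.coeff.support.filter (fun u => wt v ω g u = ((cg : ℝ) : WithTop ℝ)) with hTgdef
  have hTfne : Tf.Nonempty := by
    obtain ⟨u, hu, he⟩ := Finset.exists_mem_eq_inf f.coeff.support hfs (wt v ω f)
    exact ⟨u, Finset.mem_filter.2 ⟨hu, by rw [← he, ← omegaWeight_def, hf]⟩⟩
  have hTgne : Tg.Nonempty := by
    obtain ⟨u, hu, he⟩ := Finset.exists_mem_eq_inf g.coeff.support hgs (wt v ω g)
    exact ⟨u, Finset.mem_filter.2 ⟨hu, by rw [← he, ← omegaWeight_def, hg]⟩⟩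
  obtain ⟨df, hdfT, hdfmax⟩ := Tf.exists_max_image toLex hTfne
  obtain ⟨dg, hdgT, hdgmax⟩ := Tg.exists_max_image toLex hTgne
  have hdf := Finset.mem_filter.1 hdfT
  have hdg := Finset.mem_filter.1 hdgT
  set D := df + dg with hD
  have hvdf : v (f.coeff df) = ((cf - ip ω df : ℝ) : WithTop ℝ) := by
    rw [coe_sub_eq_iff]
    exact hdf.2
  have hvdg : v (g.coeff dg) = ((cg - ip ω dg : ℝ) : WithTop ℝ) := by
    rw [coe_sub_eq_iff]
    exact hdg.2
  have hVeq : v (f.coeff df) + v (g.coeff dg) = ((cf + cg - ip ω D : ℝ) : WithTop ℝ) := by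
    rw [hvdf, hvdg, ← WithTop.coe_add, WithTop.coe_eq_coe, hD, ip_add]
    ring
  have hmemprod : (df, dg) ∈ f.coeff.support ×ˢ g.coeff.support := Finset.mem_product.2 ⟨hdf.1, hdg.1⟩
  have hexp : (f * g).coeff D = (f.coeff df * g.coeff dg) +
      ∑ p ∈ (f.coeff.support ×ˢ g.coeff.support).erase (df, dg),
        (if p.1 + p.2 = D then f.coeff p.1 * g.coeff p.2 else 0) := by
    rw [mul_apply_prod, ← Finset.add_sum_erase _ _ hmemprod]
    congr 1
    rw [if_pos rfl]
  have hstrict : ∀ p ∈ (f.coeff.support ×ˢ g.coeff.support).erase (df, dg),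
      v (f.coeff df) + v (g.coeff dg) < v (if p.1 + p.2 = D then f.coeff p.1 * g.coeff p.2 else 0) := by
    intro p hp
    obtain ⟨hpne, hpmem⟩ := Finset.mem_erase.1 hp
    obtain ⟨hp1, hp2⟩ := Finset.mem_product.1 hpmem
    by_cases hpu : p.1 + p.2 = D
    · rw [if_pos hpu, hvmul]
      have hb1 : ((cf : ℝ) : WithTop ℝ) ≤ wt v ω f p.1 := by
        rw [← hf, omegaWeight_def]; exact Finset.inf_le hp1
      have hb2 : ((cg : ℝ) : WithTop ℝ) ≤ wt v ω g p.2 := by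
        rw [← hg, omegaWeight_def]; exact Finset.inf_le hp2
      have hne : wt v ω f p.1 ≠ ((cf : ℝ) : WithTop ℝ) ∨
          wt v ω g p.2 ≠ ((cg : ℝ) : WithTop ℝ) := by
        by_contra hcon
        push_neg at hcon
        obtain ⟨e1, e2⟩ := hcon
        have hm1 : p.1 ∈ Tf := Finset.mem_filter.2 ⟨hp1, e1⟩
        have hm2 : p.2 ∈ Tg := Finset.mem_filter.2 ⟨hp2, e2⟩
        have l1 : toLex p.1 ≤ toLex df := hdfmax _ hm1
        have l2 : toLex p.2 ≤ toLex dg := hdgmax _ hm2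
        have lsum : toLex p.1 + toLex p.2 = toLex df + toLex dg := congrArg toLex hpu
        have e3 : toLex p.1 = toLex df := by
          rcases lt_or_eq_of_le l1 with hlt | he
          · exfalso
            have hlt2 : toLex p.1 + toLex p.2 < toLex df + toLex dg :=
              lt_of_lt_of_le (add_lt_add_left hlt _) (add_le_add_right l2 _)
            rw [lsum] at hlt2
            exact lt_irrefl _ hlt2
          · exact he
        have e4 : p.1 = df := congrArg ofLex e3
        have e5 : p.2 = dg := by
          have h6 : df + p.2 = df + dg := by
            rw [hD] at hpu; rw [e4] at hpu; exact hpu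
          exact add_left_cancel h6
        exact hpne (Prod.ext e4 e5)
      rw [hVeq]
      have heqr : (cf + cg - ip ω D : ℝ) = (cf - ip ω p.1) + (cg - ip ω p.2) := by
        rw [← hpu, ip_add]; ring
      rw [heqr]
      rcases hne with hne | hne
      · exact coe_add_lt_add (coe_sub_lt_iff.2 (lt_of_le_of_ne hb1 (Ne.symm hne)))
          (coe_sub_le_iff.2 hb2)
      · exact coe_add_lt_add' (coe_sub_le_iff.2 hb1)
          (coe_sub_lt_iff.2 (lt_of_le_of_ne hb2 (Ne.symm hne)))
    · rw [if_neg hpu, v_zero hv0, hVeq]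
      exact WithTop.coe_lt_top _
  have hrest : v (f.coeff df) + v (g.coeff dg) <
      v (∑ p ∈ (f.coeff.support ×ˢ g.coeff.support).erase (df, dg),
        (if p.1 + p.2 = D then f.coeff p.1 * g.coeff p.2 else 0)) := by
    rcases Finset.eq_empty_or_nonempty ((f.coeff.support ×ˢ g.coeff.support).erase (df, dg)) with he | hne
    · rw [he, Finset.sum_empty, v_zero hv0, hVeq]
      exact WithTop.coe_lt_top _
    · obtain ⟨p0, hp0, hinf⟩ := Finset.exists_mem_eq_inf _ hne
        (fun p => v (if p.1 + p.2 = D then f.coeff p.1 * g.coeff p.2 else 0))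
      calc v (f.coeff df) + v (g.coeff dg)
          < v (if p0.1 + p0.2 = D then f.coeff p0.1 * g.coeff p0.2 else 0) := hstrict p0 hp0
        _ = _ := hinf.symm
        _ ≤ _ := v_sum hv0 hvadd _ _ _ fun p hp => Finset.inf_le hp
  have hcoef : v ((f * g).coeff D) = ((cf + cg - ip ω D : ℝ) : WithTop ℝ) := by
    rw [hexp, v_add_eq_left hv0 hvmul hvadd (by rw [hvmul]; exact hrest), hvmul, hVeq]
  have hDmem : D ∈ (f * g).coeff.support := by
    rw [Finsupp.mem_support_iff]
    intro h0
    rw [h0, v_zero hv0] at hcoef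
    exact WithTop.top_ne_coe hcoef
  calc omegaWeight v ω (f * g) ≤ wt v ω (f * g) D := Finset.inf_le hDmem
    _ = ((cf + cg : ℝ) : WithTop ℝ) := by
        show v ((f * g).coeff D) + _ = _
        rw [hcoef, ← WithTop.coe_add, WithTop.coe_eq_coe]
        ring

lemma wt_one_ge (hv0 : ∀ α : K, v α = ⊤ ↔ α = 0)
    (hvmul : ∀ α β : K, v (α * β) = v α + v β) (ω : Fin n → ℝ) (u : Fin n → ℤ) :
    ((0 : ℝ) : WithTop ℝ) ≤ wt v ω (1 : AddMonoidAlgebra K (Fin n → ℤ)) u := by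
  by_cases hu : u = 0
  · subst hu
    have h1 : (1 : AddMonoidAlgebra K (Fin n → ℤ)).coeff 0 = 1 := by
      rw [AddMonoidAlgebra.one_def]; simp
    show _ ≤ v _ + _
    rw [h1, v_one hv0 hvmul, ip_zero]
    simp
  · have h1 : (1 : AddMonoidAlgebra K (Fin n → ℤ)).coeff u = 0 := by
      rw [AddMonoidAlgebra.one_def]
      exact Finsupp.single_eq_of_ne hu
    show _ ≤ v _ + _
    rw [h1, v_zero hv0, top_add]
    exact le_top

lemma omegaWeight_one (hv0 : ∀ α : K, v α = ⊤ ↔ α = 0)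
    (hvmul : ∀ α β : K, v (α * β) = v α + v β) (ω : Fin n → ℝ) :
    omegaWeight v ω (1 : AddMonoidAlgebra K (Fin n → ℤ)) = ((0 : ℝ) : WithTop ℝ) := by
  rw [omegaWeight_def]
  have hsupp : (1 : AddMonoidAlgebra K (Fin n → ℤ)).coeff.support = {0} := by
    rw [AddMonoidAlgebra.one_def]
    exact Finsupp.support_single_ne_zero _ one_ne_zero
  rw [hsupp, Finset.inf_singleton]
  show v ((1 : AddMonoidAlgebra K (Fin n → ℤ)).coeff 0) + _ = _
  have h1 : (1 : AddMonoidAlgebra K (Fin n → ℤ)).coeff 0 = 1 := by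
    rw [AddMonoidAlgebra.one_def]; simp
  rw [h1, v_one hv0 hvmul, ip_zero, zero_add]

lemma pow_upper (hv0 : ∀ α : K, v α = ⊤ ↔ α = 0)
    (hvmul : ∀ α β : K, v (α * β) = v α + v β)
    (hvadd : ∀ α β : K, min (v α) (v β) ≤ v (α + β))
    (ω : Fin n → ℝ) (f : AddMonoidAlgebra K (Fin n → ℤ)) (c : ℝ)
    (hf : omegaWeight v ω f = ((c : ℝ) : WithTop ℝ)) (k : ℕ) :
    ∃ ck : ℝ, omegaWeight v ω (f ^ k) = ((ck : ℝ) : WithTop ℝ) ∧ ck ≤ k * c := by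
  induction k with
  | zero =>
    refine ⟨0, ?_, by norm_num⟩
    rw [pow_zero]
    exact omegaWeight_one hv0 hvmul ω
  | succ k ih =>
    obtain ⟨ck, hck, hckle⟩ := ih
    have hle : omegaWeight v ω (f ^ (k + 1)) ≤ ((ck + c : ℝ) : WithTop ℝ) := by
      rw [pow_succ]
      exact omegaWeight_mul_le hv0 hvmul hvadd ω (f ^ k) f ck c hck hf
    have hne : omegaWeight v ω (f ^ (k + 1)) ≠ ⊤ := fun h => by
      rw [h] at hle
      exact absurd hle (by simp)
    obtain ⟨r, hr⟩ := WithTop.ne_top_iff_exists.1 hne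
    refine ⟨r, hr.symm, ?_⟩
    rw [← hr] at hle
    have h1 : r ≤ ck + c := WithTop.coe_le_coe.1 hle
    push_cast
    linarith

lemma pow_lower (hv0 : ∀ α : K, v α = ⊤ ↔ α = 0)
    (hvmul : ∀ α β : K, v (α * β) = v α + v β)
    (hvadd : ∀ α β : K, min (v α) (v β) ≤ v (α + β))
    (ω : Fin n → ℝ) (f : AddMonoidAlgebra K (Fin n → ℤ)) (c : ℝ)
    (hfl : ∀ u, ((c : ℝ) : WithTop ℝ) ≤ wt v ω f u) (k : ℕ) (u : Fin n → ℤ) :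
    (((k : ℝ) * c : ℝ) : WithTop ℝ) ≤ wt v ω (f ^ k) u := by
  induction k generalizing u with
  | zero =>
    rw [pow_zero]
    have := wt_one_ge hv0 hvmul ω (u := u)
    simpa using this
  | succ k ih =>
    have := wt_mul_ge hv0 hvmul hvadd ω (f ^ k) f ((k : ℝ) * c) c ih hfl u
    rw [pow_succ]
    refine le_trans (le_of_eq ?_) this
    rw [WithTop.coe_eq_coe]
    push_cast
    ring

end main

end Stmt4Aux

open Stmt4Aux in
/-- `K[M]^Δ` is integrally closed in `K[M]` for a polytope `Δ`:  if `Δ` is given by its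
(finite, nonempty) vertex set `S`, so that `K[M]^Δ = ⋂_{ω ∈ S} K[M]^ω`, and `f ∈ K[M]`
satisfies a monic equation `f^m + a_{m-1} f^{m-1} + ⋯ + a_0 = 0` with all
`a_i ∈ K[M]^Δ`, then `f ∈ K[M]^Δ`. -/
theorem stmt4 {K : Type*} [Field K] {n : ℕ}
    (v : K → WithTop ℝ)
    (hv0 : ∀ α : K, v α = ⊤ ↔ α = 0)
    (hvmul : ∀ α β : K, v (α * β) = v α + v β)
    (hvadd : ∀ α β : K, min (v α) (v β) ≤ v (α + β))
    (S : Finset (Fin n → ℝ)) (hS : S.Nonempty)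
    (f : AddMonoidAlgebra K (Fin n → ℤ)) (m : ℕ) (hm : 0 < m)
    (a : Fin m → AddMonoidAlgebra K (Fin n → ℤ))
    (ha : ∀ i : Fin m, ∀ ω ∈ S, (0 : WithTop ℝ) ≤ omegaWeight v ω (a i))
    (heq : f ^ m + ∑ i : Fin m, a i * f ^ (i : ℕ) = 0) :
    ∀ ω ∈ S, (0 : WithTop ℝ) ≤ omegaWeight v ω f := by
  intro ω hω
  by_contra hneg
  push_neg at hneg
  have hne : omegaWeight v ω f ≠ ⊤ := ne_top_of_lt hneg
  obtain ⟨c, hc⟩ := WithTop.ne_top_iff_exists.1 hne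
  have hcneg : c < 0 := by
    rw [← hc] at hneg
    exact_mod_cast hneg
  have hflow : ∀ u, ((c : ℝ) : WithTop ℝ) ≤ wt v ω f u :=
    (le_omegaWeight_iff hv0 ω f c).1 (le_of_eq hc)
  obtain ⟨cm, hcm, hcmle⟩ := pow_upper hv0 hvmul hvadd ω f c hc.symm m
  have hfm : f ^ m = -∑ i : Fin m, a i * f ^ (i : ℕ) := eq_neg_of_add_eq_zero_left heq
  set b : ℝ := ((m : ℝ) - 1) * c with hb
  have hterm : ∀ i : Fin m, ∀ u, ((b : ℝ) : WithTop ℝ) ≤ wt v ω (a i * f ^ (i : ℕ)) u := by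
    intro i u
    have hai : ∀ u, ((0 : ℝ) : WithTop ℝ) ≤ wt v ω (a i) u :=
      (le_omegaWeight_iff hv0 ω (a i) 0).1 (by exact_mod_cast ha i ω hω)
    have hpow := pow_lower hv0 hvmul hvadd ω f c hflow (i : ℕ)
    have hmul := wt_mul_ge hv0 hvmul hvadd ω (a i) (f ^ (i : ℕ)) 0 (((i : ℕ) : ℝ) * c)
      hai hpow u
    refine le_trans ?_ hmul
    rw [WithTop.coe_le_coe]
    have hi : ((i : ℕ) : ℝ) + 1 ≤ (m : ℝ) := by exact_mod_cast i.isLt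
    nlinarith
  have hsum : ((b : ℝ) : WithTop ℝ) ≤ omegaWeight v ω (∑ i : Fin m, a i * f ^ (i : ℕ)) := by
    rw [le_omegaWeight_iff hv0]
    intro u
    show _ ≤ v ((∑ i : Fin m, a i * f ^ (i : ℕ)).coeff u) + _
    have happ : (∑ i : Fin m, a i * f ^ (i : ℕ)).coeff u = ∑ i : Fin m, (a i * f ^ (i : ℕ)).coeff u := by
      rw [AddMonoidAlgebra.coeff_sum, Finset.sum_apply']
    rw [happ]
    have hval : ((b - ip ω u : ℝ) : WithTop ℝ) ≤ v (∑ i : Fin m, (a i * f ^ (i : ℕ)).coeff u) :=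
      v_sum hv0 hvadd _ _ _ fun i _ => coe_sub_le_iff.2 (hterm i u)
    exact coe_sub_le_iff.1 hval
  have hnegwt : omegaWeight v ω (-∑ i : Fin m, a i * f ^ (i : ℕ)) =
      omegaWeight v ω (∑ i : Fin m, a i * f ^ (i : ℕ)) := by
    rw [omegaWeight_def, omegaWeight_def, AddMonoidAlgebra.coeff_neg, Finsupp.support_neg]
    refine Finset.inf_congr rfl fun u _ => ?_
    show v ((-∑ i : Fin m, a i * f ^ (i : ℕ)).coeff u) + _ = v ((∑ i : Fin m, a i * f ^ (i : ℕ)).coeff u) + _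
    rw [AddMonoidAlgebra.coeff_neg, Finsupp.neg_apply, v_neg hv0 hvmul]
  have hfin : ((b : ℝ) : WithTop ℝ) ≤ ((cm : ℝ) : WithTop ℝ) := by
    rw [← hcm, hfm, hnegwt]
    exact hsum
  have hbc : b ≤ cm := WithTop.coe_le_coe.1 hfin
  have hb2 : b = (m : ℝ) * c - c := by rw [hb]; ring
  linarith
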